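/- Let (A,C,ψ) be an entwining structure and define on I^•(A,C,ψ) the codegeneracies (σ_j f)(c ⊗ a₁ ⊗ ... ⊗ a_{n+1}) = f(c ⊗ a₁ ⊗ ... a_j ⊗ 1_A ⊗ a_{j+1} ⊗ ... ⊗ a_{n+1}) and the cyclic operator (τ_n g)(c ⊗ a₁ ⊗ ... ⊗ a_{n+1}) = (-1)^n g(c^ψ ⊗ a₂ ⊗ ... ⊗ a_{n+1} ⊗ a_{1ψ}). Then σ₀ τ_{n+1}² = (-1)^n τ_n σ_n as maps I^{n+1}(A,C,ψ) → I^n(A,C,ψ). -/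

import Mathlib

open TensorProduct

/-- An entwining structure `(A, C, ψ)` over a field `k`: a unital `k`-algebra `A`,
a counital `k`-coalgebra `C` and a `k`-linear map `ψ : C ⊗ A → A ⊗ C` satisfying the
entwining axioms of Brzeziński–Majid. -/
structure Entwining (k A C : Type) [Field k] [Ring A] [Algebra k A]
    [AddCommGroup C] [Module k C] [Coalgebra k C] : Type where
  ψ : C ⊗[k] A →ₗ[k] A ⊗[k] C
  mul_compat : ψ ∘ₗ TensorProduct.map (LinearMap.id : C →ₗ[k] C) (LinearMap.mul' k A) =
    TensorProduct.map (LinearMap.mul' k A) (LinearMap.id : C →ₗ[k] C)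
      ∘ₗ (TensorProduct.assoc k A A C).symm.toLinearMap
      ∘ₗ TensorProduct.map (LinearMap.id : A →ₗ[k] A) ψ
      ∘ₗ (TensorProduct.assoc k A C A).toLinearMap
      ∘ₗ TensorProduct.map ψ (LinearMap.id : A →ₗ[k] A)
      ∘ₗ (TensorProduct.assoc k C A A).symm.toLinearMap
  comul_compat : TensorProduct.map (LinearMap.id : A →ₗ[k] A)
        (CoalgebraStruct.comul (R := k) (A := C)) ∘ₗ ψ =
    (TensorProduct.assoc k A C C).toLinearMap
      ∘ₗ TensorProduct.map ψ (LinearMap.id : C →ₗ[k] C)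
      ∘ₗ (TensorProduct.assoc k C A C).symm.toLinearMap
      ∘ₗ TensorProduct.map (LinearMap.id : C →ₗ[k] C) ψ
      ∘ₗ (TensorProduct.assoc k C C A).toLinearMap
      ∘ₗ TensorProduct.map (CoalgebraStruct.comul (R := k) (A := C)) (LinearMap.id : A →ₗ[k] A)
  counit_compat : (TensorProduct.rid k A).toLinearMap
      ∘ₗ TensorProduct.map (LinearMap.id : A →ₗ[k] A)
        (CoalgebraStruct.counit (R := k) (A := C)) ∘ₗ ψ =
    (TensorProduct.lid k A).toLinearMap
      ∘ₗ TensorProduct.map (CoalgebraStruct.counit (R := k) (A := C)) (LinearMap.id : A →ₗ[k] A)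
  unit_compat : ∀ c : C, ψ (c ⊗ₜ[k] (1 : A)) = (1 : A) ⊗ₜ[k] c

variable {k A C : Type}

set_option maxHeartbeats 1000000

theorem exists_fin_rep {k M N : Type} [CommRing k] [AddCommGroup M] [Module k M]
    [AddCommGroup N] [Module k N] (x : M ⊗[k] N) :
    ∃ (t : ℕ) (α : Fin t → M) (γ : Fin t → N), x = ∑ i, α i ⊗ₜ[k] γ i := by
  induction x with
  | zero => exact ⟨0, Fin.elim0, Fin.elim0, by simp⟩
  | tmul m n => exact ⟨1, fun _ => m, fun _ => n, by simp⟩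
  | add x y hx hy =>
    obtain ⟨t₁, α₁, γ₁, h₁⟩ := hx
    obtain ⟨t₂, α₂, γ₂, h₂⟩ := hy
    exact ⟨t₁ + t₂, Fin.append α₁ α₂, Fin.append γ₁ γ₂, by
      simp [Fin.sum_univ_add, h₁, h₂]⟩

theorem insertNth_zero_succ {A : Type} [Ring A] {n : ℕ} (v : Fin (n + 1) → A)
    (i : Fin (n + 1)) :
    Fin.insertNth (α := fun _ => A) (0 : Fin (n + 2)) (1 : A) v i.succ = v i := by
  have := Fin.insertNth_apply_succAbove (α := fun _ => A) (0 : Fin (n + 2)) (1 : A) v i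
  rwa [Fin.zero_succAbove] at this

set_option maxHeartbeats 0 in
theorem fin_key {A : Type} [Ring A] (n : ℕ) (v : Fin (n + 1) → A) (a : A) :
    Function.update ((fun j : Fin (n + 2) =>
      (Function.update ((fun j' : Fin (n + 2) =>
          Fin.insertNth (α := fun _ => A) (0 : Fin (n + 2)) (1 : A) v (j' + 1)) : Fin (n + 2) → A)
        (Fin.last (n + 1)) (1 : A)) (j + 1)) : Fin (n + 2) → A) (Fin.last (n + 1)) a
    = Fin.insertNth (α := fun _ => A) (⟨n, Nat.lt_succ_of_lt (Nat.lt_succ_self n)⟩ : Fin (n + 2)) (1 : A)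
        (Function.update (fun j : Fin (n + 1) => v (j + 1)) (Fin.last n) a) := by
  have hadd : ∀ (m : ℕ) (hm' : m < n + 2) (hm : m + 1 < n + 2),
      (⟨m, hm'⟩ : Fin (n + 2)) + 1 = ⟨m + 1, hm⟩ := by
    intro m hm' hm
    apply Fin.ext
    simp [Fin.add_def, Nat.mod_eq_of_lt hm]
  have hadd1 : ∀ (m : ℕ) (hm' : m < n + 1) (hm : m + 1 < n + 1),
      (⟨m, hm'⟩ : Fin (n + 1)) + 1 = ⟨m + 1, hm⟩ := by
    intro m hm' hm
    apply Fin.ext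
    simp [Fin.add_def, Nat.mod_eq_of_lt hm]
  funext j
  rcases j with ⟨m, hm⟩
  rcases Nat.lt_trichotomy m n with h | h | h
  · have hne : (⟨m, hm⟩ : Fin (n + 2)) ≠ Fin.last (n + 1) := by
      simp [Fin.ext_iff]; omega
    rw [Function.update_of_ne hne]
    have h1 : (⟨m, hm⟩ : Fin (n + 2)) + 1 = ⟨m + 1, by omega⟩ := hadd m hm (by omega)
    rw [h1]
    have hne2 : (⟨m + 1, by omega⟩ : Fin (n + 2)) ≠ Fin.last (n + 1) := by
      simp [Fin.ext_iff]; omega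
    rw [Function.update_of_ne hne2]
    have h2 : (⟨m + 1, by omega⟩ : Fin (n + 2)) + 1 = ⟨m + 2, by omega⟩ :=
      hadd (m + 1) (by omega) (by omega)
    rw [h2]
    have h3 : (⟨m + 2, by omega⟩ : Fin (n + 2)) = (⟨m + 1, by omega⟩ : Fin (n + 1)).succ := rfl
    rw [h3, insertNth_zero_succ]
    have hsa : (⟨n, by omega⟩ : Fin (n + 2)).succAbove ⟨m, by omega⟩ = ⟨m, hm⟩ := by
      rw [Fin.succAbove, if_pos]
      · rfl
      · simp [Fin.lt_iff_val_lt_val]; omega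
    have e1 := Fin.insertNth_apply_succAbove (α := fun _ => A) (⟨n, by omega⟩ : Fin (n + 2))
      (1 : A) (Function.update (fun j : Fin (n + 1) => v (j + 1)) (Fin.last n) a) ⟨m, by omega⟩
    rw [(congrArg _ hsa).symm.trans e1]
    have hne3 : (⟨m, by omega⟩ : Fin (n + 1)) ≠ Fin.last n := by
      simp [Fin.ext_iff]; omega
    rw [Function.update_of_ne hne3, hadd1 m (by omega) (by omega)]
  · have hne : (⟨m, hm⟩ : Fin (n + 2)) ≠ Fin.last (n + 1) := by
      simp [Fin.ext_iff]; omega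
    rw [Function.update_of_ne hne]
    have h1 : (⟨m, hm⟩ : Fin (n + 2)) + 1 = Fin.last (n + 1) := by
      rw [hadd m hm (by omega)]
      exact Fin.ext (by simp [Fin.last]; omega)
    rw [h1, Function.update_self]
    have hpj : (⟨m, hm⟩ : Fin (n + 2)) = ⟨n, by omega⟩ := Fin.ext h
    rw [hpj, Fin.insertNth_apply_same]
  · have hlast : (⟨m, hm⟩ : Fin (n + 2)) = Fin.last (n + 1) := by
      simp [Fin.ext_iff]; omega
    rw [hlast, Function.update_self]
    have hsa : (⟨n, by omega⟩ : Fin (n + 2)).succAbove (Fin.last n) = Fin.last (n + 1) := by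
      rw [Fin.succAbove, if_neg]
      · exact Fin.succ_last n
      · simp [Fin.lt_iff_val_lt_val]
    have e1 := Fin.insertNth_apply_succAbove (α := fun _ => A) (⟨n, by omega⟩ : Fin (n + 2))
      (1 : A) (Function.update (fun j : Fin (n + 1) => v (j + 1)) (Fin.last n) a) (Fin.last n)
    rw [(congrArg _ hsa).symm.trans e1, Function.update_self]



/-- `IterRep e m c v ι γ β` says that `Σ_{s : ι} (β s) ⊗ (γ s)` is a representation of
the `m`-fold iterated entwining `c^{ψ^m} ⊗ v_{1ψ} ⊗ ⋯ ⊗ v_{mψ}`, obtained by applying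
`ψ` successively: first to `(c, v 0)`, then to the resulting coalgebra elements and
`v 1`, and so on. -/
inductive IterRep [Field k] [Ring A] [Algebra k A] [AddCommGroup C] [Module k C]
    [Coalgebra k C] (e : Entwining k A C) :
    (m : ℕ) → C → (Fin m → A) → (ι : Type) → (ι → C) → (ι → (Fin m → A)) → Prop
  | zero (c : C) :
      IterRep e 0 c Fin.elim0 PUnit (fun _ => c) (fun _ => Fin.elim0)
  | succ {m : ℕ} (c : C) (v : Fin (m + 1) → A) (ι₀ : Type) [Fintype ι₀]
      (α : ι₀ → A) (γ₀ : ι₀ → C)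
      (h : e.ψ (c ⊗ₜ[k] v 0) = ∑ i, α i ⊗ₜ[k] γ₀ i)
      (κ : ι₀ → Type) (γ : (i : ι₀) → κ i → C) (β : (i : ι₀) → κ i → (Fin m → A))
      (hs : ∀ i : ι₀, IterRep e m (γ₀ i) (fun j => v j.succ) (κ i) (γ i) (β i)) :
      IterRep e (m + 1) c v ((i : ι₀) × κ i) (fun p => γ p.1 p.2)
        (fun p => Fin.cons (α p.1) (β p.1 p.2))

/-- `g ∈ ℐ^{m-1}(A,C,ψ)`: the functional `g : C ⊗ A^{⊗m} → k` is invariant, i.e.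
`g(c ⊗ a₁ ⊗ ⋯ ⊗ a_m) = g(c^{ψ^m} ⊗ a_{1ψ} ⊗ ⋯ ⊗ a_{mψ})`, stated via arbitrary
representations of the iterated entwining. -/
def EntwInvariant [Field k] [Ring A] [Algebra k A] [AddCommGroup C] [Module k C]
    [Coalgebra k C] (e : Entwining k A C) {m : ℕ}
    (g : C →ₗ[k] MultilinearMap k (fun _ : Fin m => A) k) : Prop :=
  ∀ (c : C) (v : Fin m → A) (ι : Type) [Fintype ι] (γ : ι → C) (β : ι → (Fin m → A)),
    IterRep e m c v ι γ β → g c v = ∑ s, g (γ s) (β s)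

/-- `TauRel e g tg` says that `tg = τ_m g` is the cyclic operator applied to `g`:
`(τ_m g)(c ⊗ a₁ ⊗ ⋯ ⊗ a_{m+1}) = (-1)^m g(c^ψ ⊗ a₂ ⊗ ⋯ ⊗ a_{m+1} ⊗ a_{1ψ})`, stated
via arbitrary representations `ψ(c ⊗ a₁) = Σ αᵢ ⊗ γᵢ`. -/
def TauRel [Field k] [Ring A] [Algebra k A] [AddCommGroup C] [Module k C] [Coalgebra k C]
    (e : Entwining k A C) {m : ℕ}
    (g tg : C →ₗ[k] MultilinearMap k (fun _ : Fin (m + 1) => A) k) : Prop :=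
  ∀ (c : C) (v : Fin (m + 1) → A) (t : ℕ) (α : Fin t → A) (γ : Fin t → C),
    e.ψ (c ⊗ₜ[k] v 0) = ∑ i, α i ⊗ₜ[k] γ i →
    tg c v = (-1 : k) ^ m *
      ∑ i, g (γ i) (Function.update (fun j : Fin (m + 1) => v (j + 1)) (Fin.last m) (α i))

/-- On the cocyclic module `ℐ^•(A,C,ψ)`, with codegeneracies
`(σ_j f)(c ⊗ a₁ ⊗ ⋯ ⊗ a_{n+1}) = f(c ⊗ a₁ ⊗ ⋯ ⊗ a_j ⊗ 1 ⊗ a_{j+1} ⊗ ⋯ ⊗ a_{n+1})`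
and the cyclic operator `τ`, the identity `σ₀ ∘ τ_{n+1}² = (-1)ⁿ τ_n ∘ σ_n` holds as
maps `ℐ^{n+1}(A,C,ψ) → ℐⁿ(A,C,ψ)`. -/
theorem codegeneracy_cyclic_compat
    [Field k] [Ring A] [Algebra k A] [AddCommGroup C] [Module k C] [Coalgebra k C]
    (e : Entwining k A C) (n : ℕ)
    (g' : C →ₗ[k] MultilinearMap k (fun _ : Fin (n + 2) => A) k)
    (hg' : EntwInvariant e g')
    (t1 t2 : C →ₗ[k] MultilinearMap k (fun _ : Fin (n + 2) => A) k)
    (ht1 : TauRel e g' t1)   -- t1 = τ_{n+1} g'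
    (ht2 : TauRel e t1 t2)   -- t2 = τ_{n+1}² g'
    (s0 : C →ₗ[k] MultilinearMap k (fun _ : Fin (n + 1) => A) k)
    (hs0 : ∀ (c : C) (v : Fin (n + 1) → A),   -- s0 = σ₀ (τ_{n+1}² g')
      s0 c v = t2 c (Fin.insertNth (0 : Fin (n + 2)) (1 : A) v))
    (sn : C →ₗ[k] MultilinearMap k (fun _ : Fin (n + 1) => A) k)
    (hsn : ∀ (c : C) (v : Fin (n + 1) → A),   -- sn = σ_n g'
      sn c v = g' c (Fin.insertNth (⟨n, by omega⟩ : Fin (n + 2)) (1 : A) v))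
    (tsn : C →ₗ[k] MultilinearMap k (fun _ : Fin (n + 1) => A) k)
    (htsn : TauRel e sn tsn) :   -- tsn = τ_n (σ_n g')
    ∀ (c : C) (v : Fin (n + 1) → A), s0 c v = (-1 : k) ^ n * tsn c v := by
  intro c v
  obtain ⟨t, α, γ, hrep⟩ := exists_fin_rep (e.ψ (c ⊗ₜ[k] v 0))
  have hw0 : Fin.insertNth (α := fun _ => A) (0 : Fin (n + 2)) (1 : A) v 0 = 1 :=
    Fin.insertNth_apply_same _ _ _
  have hrep1 : e.ψ (c ⊗ₜ[k] Fin.insertNth (α := fun _ => A) (0 : Fin (n + 2)) (1 : A) v 0)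
      = ∑ i : Fin 1, (fun _ => (1 : A)) i ⊗ₜ[k] (fun _ => c) i := by
    rw [hw0, e.unit_compat c]
    simp
  have h2 := ht2 c (Fin.insertNth (α := fun _ => A) (0 : Fin (n + 2)) (1 : A) v)
    1 (fun _ => (1 : A)) (fun _ => c) hrep1
  rw [hs0, h2, Fin.sum_univ_one]
  have hU0 : Function.update ((fun j : Fin (n + 2) =>
      Fin.insertNth (α := fun _ => A) (0 : Fin (n + 2)) (1 : A) v (j + 1)) : Fin (n + 2) → A)
      (Fin.last (n + 1)) (1 : A) 0 = v 0 := by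
    rw [Function.update_of_ne (by simp [Fin.ext_iff] : (0 : Fin (n + 2)) ≠ Fin.last (n + 1))]
    have h0 : (0 : Fin (n + 2)) + 1 = (0 : Fin (n + 1)).succ := rfl
    rw [h0, insertNth_zero_succ]
  have h1 := ht1 c (Function.update ((fun j : Fin (n + 2) =>
      Fin.insertNth (α := fun _ => A) (0 : Fin (n + 2)) (1 : A) v (j + 1)) : Fin (n + 2) → A)
      (Fin.last (n + 1)) (1 : A)) t α γ (by rw [hU0]; exact hrep)
  rw [h1, htsn c v t α γ hrep]
  have hsum : ∀ i : Fin t,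
      g' (γ i) (Function.update (fun j : Fin (n + 2) =>
        Function.update ((fun j' : Fin (n + 2) =>
          Fin.insertNth (α := fun _ => A) (0 : Fin (n + 2)) (1 : A) v (j' + 1)) : Fin (n + 2) → A)
          (Fin.last (n + 1)) (1 : A) (j + 1)) (Fin.last (n + 1)) (α i))
      = sn (γ i) (Function.update (fun j : Fin (n + 1) => v (j + 1)) (Fin.last n) (α i)) := by
    intro i
    rw [fin_key n v (α i), ← hsn]
  rw [Finset.sum_congr rfl (fun i _ => hsum i)]
  rw [← mul_assoc, ← mul_assoc, ← pow_add, ← pow_add,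
    Even.neg_one_pow ⟨n + 1, by ring⟩, Even.neg_one_pow ⟨n, rfl⟩]
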